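/- For an integer p ≥ 2 and a nonnegative integer d, Σ_{0 ≤ N ≤ d/(p+1)} r_p(N,N) ≤ r_p(d,d) ≤ Σ_{0 ≤ N ≤ d/p} r_p(N,N). -/

import Mathlib

/-- `r_p(M,d)`: the number of finitely supported nonincreasing sequences `m` of nonnegative
integers with `m 0 ≤ d` and `Σ m_i p^i = M`. -/
noncomputable def rp (p : ℤ) (M d : ℤ) : ℕ :=
  {m : ℕ →₀ ℤ | (∀ i, 0 ≤ m i) ∧ (∀ i, m (i + 1) ≤ m i) ∧ m 0 ≤ d ∧
    (m.sum fun i a => a * p ^ i) = M}.ncard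

namespace Stmt3Aux

/-! ### Generic counting lemmas -/

variable {α ι : Type*} [DecidableEq ι]

lemma ncard_le_sum (s : Finset ι) (B : ι → Set α) (C : Set α)
    (hfin : ∀ i ∈ s, (B i).Finite) (hsub : C ⊆ ⋃ i ∈ s, B i) :
    C.ncard ≤ ∑ i ∈ s, (B i).ncard := by
  induction s using Finset.induction generalizing C with
  | empty =>
    simp only [Finset.notMem_empty, Set.iUnion_of_empty, Set.iUnion_empty,
      Set.subset_empty_iff] at hsub
    simp [hsub]
  | @insert a s ha ih =>
    have hC : C ⊆ B a ∪ ⋃ i ∈ s, B i := by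
      intro x hx
      have := hsub hx
      simp only [Finset.mem_insert, Set.mem_iUnion, exists_prop] at this
      obtain ⟨i, hi | hi, hxi⟩ := this
      · exact Or.inl (hi ▸ hxi)
      · exact Or.inr (Set.mem_biUnion hi hxi)
    have hCeq : C = (C ∩ B a) ∪ (C \ B a) := by
      ext x; by_cases hx : x ∈ B a <;> simp [hx]
    have hun := Set.ncard_union_le (C ∩ B a) (C \ B a)
    rw [← hCeq] at hun
    rw [Finset.sum_insert ha]
    have h1 : (C ∩ B a).ncard ≤ (B a).ncard :=
      Set.ncard_le_ncard Set.inter_subset_right (hfin a (Finset.mem_insert_self a s))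
    have h2 : (C \ B a).ncard ≤ ∑ i ∈ s, (B i).ncard :=
      ih _ (fun i hi => hfin i (Finset.mem_insert_of_mem hi))
        (fun x hx => by
          rcases hC hx.1 with h | h
          · exact absurd h hx.2
          · exact h)
    omega

lemma sum_le_ncard (s : Finset ι) (B : ι → Set α) (C : Set α) (hC : C.Finite)
    (hsub : ∀ i ∈ s, B i ⊆ C)
    (hdisj : ∀ i ∈ s, ∀ j ∈ s, i ≠ j → Disjoint (B i) (B j)) :
    ∑ i ∈ s, (B i).ncard ≤ C.ncard := by
  induction s using Finset.induction generalizing C with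
  | empty => simp
  | @insert a s ha ih =>
    rw [Finset.sum_insert ha]
    have hBa : B a ⊆ C := hsub a (Finset.mem_insert_self a s)
    have hrest : ∀ i ∈ s, B i ⊆ C \ B a := by
      intro i hi x hx
      refine ⟨hsub i (Finset.mem_insert_of_mem hi) hx, ?_⟩
      have hne : i ≠ a := fun h => ha (h ▸ hi)
      exact fun hxa =>
        (hdisj i (Finset.mem_insert_of_mem hi) a (Finset.mem_insert_self a s) hne).le_bot
          ⟨hx, hxa⟩ |>.elim
    have h2 : ∑ i ∈ s, (B i).ncard ≤ (C \ B a).ncard :=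
      ih _ hC.diff hrest
        (fun i hi j hj hij => hdisj i (Finset.mem_insert_of_mem hi)
          j (Finset.mem_insert_of_mem hj) hij)
    have h3 := Set.ncard_diff_add_ncard_of_subset hBa hC
    omega

/-! ### `cons` and `tail` for finsupps on `ℕ` -/

def succEmb : ℕ ↪ ℕ := ⟨Nat.succ, Nat.succ_injective⟩

noncomputable def cons (a : ℤ) (m : ℕ →₀ ℤ) : ℕ →₀ ℤ :=
  Finsupp.single 0 a + Finsupp.embDomain succEmb m

noncomputable def tail (m : ℕ →₀ ℤ) : ℕ →₀ ℤ :=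
  Finsupp.comapDomain Nat.succ m (Nat.succ_injective.injOn)

@[simp] lemma tail_apply (m : ℕ →₀ ℤ) (i : ℕ) : tail m i = m (i + 1) := rfl

@[simp] lemma cons_zero (a : ℤ) (m : ℕ →₀ ℤ) : cons a m 0 = a := by
  simp only [cons, Finsupp.add_apply, Finsupp.single_eq_same]
  rw [Finsupp.embDomain_notin_range]
  · ring
  · rintro ⟨i, hi⟩
    exact Nat.succ_ne_zero i hi

@[simp] lemma cons_succ (a : ℤ) (m : ℕ →₀ ℤ) (i : ℕ) : cons a m (i + 1) = m i := by
  simp only [cons, Finsupp.add_apply]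
  rw [Finsupp.single_apply_eq_zero.mpr (by omega)]
  have : (i + 1) = succEmb i := rfl
  rw [this, Finsupp.embDomain_apply_self, zero_add]

@[simp] lemma tail_cons (a : ℤ) (m : ℕ →₀ ℤ) : tail (cons a m) = m := by
  ext i; simp

lemma cons_tail (m : ℕ →₀ ℤ) : cons (m 0) (tail m) = m := by
  ext i
  cases i with
  | zero => simp
  | succ i => simp

/-! ### The counted set and its basic properties -/

variable (q : ℤ)

/-- The weighted sum `Σ m_i q^i`. -/
def wsum (m : ℕ →₀ ℤ) : ℤ := m.sum fun i a => a * q ^ i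

/-- The counted set. -/
def S (M d : ℤ) : Set (ℕ →₀ ℤ) :=
  {m : ℕ →₀ ℤ | (∀ i, 0 ≤ m i) ∧ (∀ i, m (i + 1) ≤ m i) ∧ m 0 ≤ d ∧ wsum q m = M}

lemma rp_eq (M d : ℤ) : rp q M d = (S q M d).ncard := rfl

lemma wsum_cons (a : ℤ) (m : ℕ →₀ ℤ) :
    wsum q (cons a m) = a + q * wsum q m := by
  show (cons a m).sum (fun i x => x * q ^ i) = a + q * m.sum (fun i x => x * q ^ i)
  rw [cons, Finsupp.sum_add_index' (fun i => by ring) (fun i x y => by ring)]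
  rw [Finsupp.sum_single_index (by ring), Finsupp.sum_embDomain]
  have : (m.sum fun i x => x * q ^ (succEmb i)) = (m.sum fun i x => (x * q ^ i) * q) := by
    apply Finsupp.sum_congr
    intro i _
    show m i * q ^ (i + 1) = m i * q ^ i * q
    ring
  rw [this, ← Finsupp.sum_mul]
  ring

variable {q} (hq : 2 ≤ q)
include hq

lemma term_le_wsum {m : ℕ →₀ ℤ} (hm : ∀ i, 0 ≤ m i) (i : ℕ) :
    m i * q ^ i ≤ wsum q m := by
  have hterm : ∀ j ∈ m.support, 0 ≤ m j * q ^ j := fun j _ =>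
    mul_nonneg (hm j) (pow_nonneg (by linarith) j)
  by_cases hi : i ∈ m.support
  · exact Finset.single_le_sum hterm hi
  · have : m i = 0 := Finsupp.notMem_support_iff.mp hi
    rw [this, zero_mul]
    exact Finset.sum_nonneg hterm

lemma wsum_nonneg {m : ℕ →₀ ℤ} (hm : ∀ i, 0 ≤ m i) : 0 ≤ wsum q m :=
  Finset.sum_nonneg fun j _ => mul_nonneg (hm j) (pow_nonneg (by linarith) j)

lemma apply_le_wsum {m : ℕ →₀ ℤ} (hm : ∀ i, 0 ≤ m i) (i : ℕ) :
    m i ≤ wsum q m := by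
  have h := term_le_wsum hq hm i
  have h1 : (1 : ℤ) ≤ q ^ i := one_le_pow₀ (by linarith)
  nlinarith [hm i]

lemma S_finite (M d : ℤ) : (S q M d).Finite := by
  rcases lt_or_ge M 0 with hM | hM
  · convert Set.finite_empty
    ext m
    simp only [S, Set.mem_setOf_eq, Set.mem_empty_iff_false, iff_false]
    rintro ⟨h1, _, _, h4⟩
    exact absurd (h4 ▸ wsum_nonneg hq h1) (not_le.mpr hM)
  · set g : ℕ →₀ ℤ := Finsupp.indicator (Finset.range (M.toNat + 1)) (fun _ _ => M) with hg
    apply (Set.finite_Icc (0 : ℕ →₀ ℤ) g).subset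
    rintro m ⟨h1, _, _, h4⟩
    have key : ∀ i, m i * q ^ i ≤ M := fun i => h4 ▸ term_le_wsum hq h1 i
    constructor
    · exact Finsupp.le_def.mpr h1
    · rw [Finsupp.le_def]
      intro i
      by_cases hi : i < M.toNat + 1
      · have : g i = M := by simp [hg, Finsupp.indicator_apply, Finset.mem_range.mpr hi]
        rw [this]
        have h1q : (1 : ℤ) ≤ q ^ i := one_le_pow₀ (by linarith)
        nlinarith [key i, h1 i]
      · have hgi : g i = 0 := by
          simp [hg, Finsupp.indicator_apply, Finset.mem_range, hi]
        rw [hgi]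
        by_contra hlt
        push_neg at hlt
        have hmi : 1 ≤ m i := by have := h1 i; omega
        have hpow : (i : ℤ) < q ^ i := by
          calc (i : ℤ) < 2 ^ i := by exact_mod_cast (Nat.lt_two_pow_self (n := i))
          _ ≤ q ^ i := pow_le_pow_left₀ (by norm_num) hq i
        have h5 : q ^ i ≤ m i * q ^ i := le_mul_of_one_le_left (by positivity) hmi
        have hiM : (M.toNat + 1 : ℤ) ≤ i := by exact_mod_cast Nat.le_of_not_lt hi
        have h6 : (i : ℤ) ≤ M := by have := key i; omega
        omega

/-- Decomposing a member of `S q d d` : its weighted sum decomposes as `m 0 + q * N`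
where `N` is the weighted sum of the tail. -/
lemma wsum_eq_head_add {m : ℕ →₀ ℤ} :
    wsum q m = m 0 + q * wsum q (tail m) := by
  conv_lhs => rw [← cons_tail m]
  rw [wsum_cons]

/-- The tail of a member of `S q d d` lies in `S q N N` with `N = wsum (tail m)`. -/
lemma tail_mem_S {d : ℤ} {m : ℕ →₀ ℤ} (hm : m ∈ S q d d) :
    tail m ∈ S q (wsum q (tail m)) (wsum q (tail m)) := by
  obtain ⟨h1, h2, _, _⟩ := hm
  have htail_nonneg : ∀ i, 0 ≤ tail m i := fun i => h1 (i + 1)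
  exact ⟨htail_nonneg, fun i => h2 (i + 1),
    apply_le_wsum hq htail_nonneg 0, rfl⟩

/-- `cons (d - q*N) m ∈ S q d d` when `m ∈ S q N c` and `m 0 ≤ d - q*N`. -/
lemma cons_mem_S {N c d : ℤ} {m : ℕ →₀ ℤ} (hm : m ∈ S q N c) (hN : 0 ≤ N)
    (hle : m 0 ≤ d - q * N) : cons (d - q * N) m ∈ S q d d := by
  obtain ⟨h1, h2, _, h4⟩ := hm
  refine ⟨?_, ?_, ?_, ?_⟩
  · intro i
    cases i with
    | zero => simpa using le_trans (h1 0) hle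
    | succ i => simpa using h1 i
  · intro i
    cases i with
    | zero => simpa using hle
    | succ i => simpa using h2 i
  · rw [cons_zero]
    nlinarith
  · show wsum q (cons (d - q * N) m) = d
    rw [wsum_cons, h4]
    ring

end Stmt3Aux

open Stmt3Aux in
/-- `Σ_{0 ≤ N ≤ d/(p+1)} r_p(N,N) ≤ r_p(d,d) ≤ Σ_{0 ≤ N ≤ d/p} r_p(N,N)`. -/
theorem stmt_3 (p : ℕ) (hp : 2 ≤ p) (d : ℕ) :
    (∑ N ∈ Finset.Icc 0 (d / (p + 1)), rp p (N : ℤ) (N : ℤ)) ≤ rp p (d : ℤ) (d : ℤ) ∧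
    rp p (d : ℤ) (d : ℤ) ≤ ∑ N ∈ Finset.Icc 0 (d / p), rp p (N : ℤ) (N : ℤ) := by
  set q : ℤ := (p : ℤ) with hqdef
  have hq : 2 ≤ q := by rw [hqdef]; exact_mod_cast hp
  have hq0 : (0 : ℤ) < q := by linarith
  constructor
  · -- lower bound
    rw [rp_eq]
    simp only [rp_eq]
    have himg : ∀ N : ℕ, (S q (N : ℤ) (N : ℤ)).ncard
        = (cons ((d : ℤ) - q * N) '' S q (N : ℤ) (N : ℤ)).ncard := by
      intro N
      refine (Set.ncard_image_of_injOn ?_).symm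
      intro m1 _ m2 _ h
      have := congrArg tail h
      rwa [tail_cons, tail_cons] at this
    rw [Finset.sum_congr rfl (fun N _ => himg N)]
    apply sum_le_ncard _ (fun N : ℕ => cons ((d : ℤ) - q * N) '' S q (N : ℤ) (N : ℤ))
      (S q (d : ℤ) (d : ℤ)) (S_finite hq _ _)
    · -- each image is inside S q d d
      intro N hN
      simp only [Finset.mem_Icc] at hN
      have hNd : (p + 1) * N ≤ d := (Nat.le_div_iff_mul_le (by omega)).mp hN.2 |>.trans_eq' (by ring)
      rintro x ⟨m, hm, rfl⟩
      have hm0 : m 0 ≤ (N : ℤ) := hm.2.2.1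
      have hle : m 0 ≤ (d : ℤ) - q * N := by
        have : ((p + 1) * N : ℕ) ≤ (d : ℕ) := hNd
        have hcast : (q + 1) * (N : ℤ) ≤ (d : ℤ) := by rw [hqdef]; exact_mod_cast this
        nlinarith
      exact cons_mem_S hq hm (by positivity) hle
    · -- pairwise disjoint
      intro i _ j _ hij
      rw [Set.disjoint_left]
      rintro x ⟨m, hm, rfl⟩ ⟨m', hm', hx⟩
      apply hij
      have h1 : wsum q (tail (cons ((d : ℤ) - q * i) m)) = (i : ℤ) := by
        rw [tail_cons]; exact hm.2.2.2
      have h2 : wsum q (tail (cons ((d : ℤ) - q * j) m')) = (j : ℤ) := by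
        rw [tail_cons]; exact hm'.2.2.2
      rw [hx, h1] at h2
      exact_mod_cast h2
  · -- upper bound
    rw [rp_eq]
    simp only [rp_eq]
    set B : ℕ → Set (ℕ →₀ ℤ) :=
      fun N => {m ∈ S q (d : ℤ) (d : ℤ) | wsum q (tail m) = (N : ℤ)} with hB
    have hBsub : ∀ N, B N ⊆ S q (d : ℤ) (d : ℤ) := fun N x hx => hx.1
    calc (S q (d : ℤ) (d : ℤ)).ncard
        ≤ ∑ N ∈ Finset.Icc 0 (d / p), (B N).ncard := by
          apply ncard_le_sum
          · exact fun N _ => (S_finite hq _ _).subset (hBsub N)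
          · intro m hm
            have hN0 : 0 ≤ wsum q (tail m) :=
              wsum_nonneg hq (fun i => hm.1 (i + 1))
            set Nz : ℤ := wsum q (tail m) with hNz
            have hdec : (d : ℤ) = m 0 + q * Nz := by
              rw [← hm.2.2.2, wsum_eq_head_add hq]
            have hqNd : q * Nz ≤ (d : ℤ) := by
              have := hm.1 0
              omega
            have hmem : Nz.toNat ∈ Finset.Icc 0 (d / p) := by
              simp only [Finset.mem_Icc]
              refine ⟨Nat.zero_le _, ?_⟩
              rw [Nat.le_div_iff_mul_le (by omega)]
              have h7 : (p * Nz.toNat : ℤ) ≤ (d : ℤ) := by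
                rw [Int.toNat_of_nonneg hN0]
                exact hqNd
              have h8 : p * Nz.toNat ≤ d := by exact_mod_cast h7
              rw [Nat.mul_comm]
              exact h8
            refine Set.mem_biUnion hmem ?_
            refine ⟨hm, ?_⟩
            rw [Int.toNat_of_nonneg hN0]
      _ ≤ ∑ N ∈ Finset.Icc 0 (d / p), (S q (N : ℤ) (N : ℤ)).ncard := by
          apply Finset.sum_le_sum
          intro N _
          refine Set.ncard_le_ncard_of_injOn tail ?_ ?_ (S_finite hq _ _)
          · intro m hm
            have := tail_mem_S hq hm.1
            rwa [hm.2] at this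
          · intro m1 h1 m2 h2 htl
            have e1 : m1 0 = (d : ℤ) - q * N := by
              have := h1.1.2.2.2
              rw [wsum_eq_head_add hq, h1.2] at this
              omega
            have e2 : m2 0 = (d : ℤ) - q * N := by
              have := h2.1.2.2.2
              rw [wsum_eq_head_add hq, h2.2] at this
              omega
            calc m1 = cons (m1 0) (tail m1) := (cons_tail m1).symm
              _ = cons (m2 0) (tail m2) := by rw [e1, e2, htl]
              _ = m2 := cons_tail m2
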